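/- For every symbol a ∈ Σ and every disjunctive multiplicity expression E, the set {x ∈ ℕ | ∃ w ∈ L(E), w(a) = x} equals ⟦M⟧ for some multiplicity M ∈ {*, +, ?, 0, 1}; that is, the set of possible occurrence counts of each symbol is one of ℕ, ℕ\{0}, {0,1}, {0}, {1}. -/

import Mathlib

open scoped Classical

variable {α : Type}

/-- Unordered words: multisets of symbols, as occurrence-count functions. -/
abbrev UWord (α : Type) := α → ℕ

/-- Multiplicities `*`, `+`, `?`, `0`, `1`. -/
inductive Mult : Type where
  | zero | one | opt | plus | star
deriving DecidableEq

/-- Interpretation of multiplicities as sets of natural numbers. -/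
def Mult.sem : Mult → Set ℕ
  | .zero => {0}
  | .one => {1}
  | .opt => {0, 1}
  | .plus => {n | 0 < n}
  | .star => Set.univ

/-- A disjunction `a₁^{M₁} | … | a_k^{M_k}`. -/
abbrev Disj (α : Type) := List (α × Mult)

/-- A disjunctive multiplicity expression `D₁^{M₁} ⊎ … ⊎ D_n^{M_n}`. -/
abbrev DME (α : Type) := List (Disj α × Mult)

/-- Language of `a^M`. -/
def singleLang (a : α) (m : Mult) : Set (UWord α) :=
  {w | w a ∈ m.sem ∧ ∀ b, b ≠ a → w b = 0}

/-- Language of a disjunction. -/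
def disjLang (D : Disj α) : Set (UWord α) :=
  {w | ∃ p ∈ D, w ∈ singleLang p.1 p.2}

/-- Pointwise (multiset) sum of a list of unordered words. -/
def sumWords (ws : List (UWord α)) : UWord α := fun a => (ws.map (fun u => u a)).sum

/-- Language of `D^M`. -/
def powLang (L : Set (UWord α)) (m : Mult) : Set (UWord α) :=
  {w | ∃ ws : List (UWord α), ws.length ∈ m.sem ∧ (∀ u ∈ ws, u ∈ L) ∧ w = sumWords ws}

/-- Language of a disjunctive multiplicity expression. -/
def dmeLang (E : DME α) : Set (UWord α) :=
  {w | ∃ ws : List (UWord α),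
      List.Forall₂ (fun p u => u ∈ powLang (disjLang p.1) p.2) E ws ∧ w = sumWords ws}

/-- Symbols occurring in a disjunctive multiplicity expression. -/
def dmeSymbols (E : DME α) : List α := E.flatMap (fun p => p.1.map Prod.fst)

/-- Normalized disjunctive multiplicity expression (each symbol occurs at most once,
each disjunction nonempty, and the two normal-form conditions of the paper). -/
def Normalized (E : DME α) : Prop :=
  (dmeSymbols E).Nodup ∧
  ∀ p ∈ E, p.1 ≠ [] ∧
    (p.2 ≠ Mult.one → p.2 = Mult.plus ∧ ∀ q ∈ p.1, q.2 = Mult.one) ∧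
    ((∃ q ∈ p.1, (0 : ℕ) ∈ q.2.sem) → ∀ q ∈ p.1, (0 : ℕ) ∈ q.2.sem)

/-- Conflicting pairs of siblings `C_E`. -/
def CE (E : DME α) : Set (α × α) :=
  {p | ¬ ∃ w ∈ dmeLang E, w p.1 ≠ 0 ∧ w p.2 ≠ 0}

/-- Extended cardinality map `N_E`. -/
def NE (E : DME α) : Set (α × ℕ) :=
  {p | ∃ w ∈ dmeLang E, w p.1 = p.2}

/-- Sets of required symbols `P_E`. -/
def PE (E : DME α) : Set (Set α) :=
  {X | ∀ w ∈ dmeLang E, ∃ a ∈ X, w a ≠ 0}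

/-- Consistency of an unordered word with a characterizing triple. -/
def ConsTriple (w : UWord α) (C : Set (α × α)) (N : Set (α × ℕ)) (P : Set (Set α)) : Prop :=
  (∀ p ∈ C, ¬ (w p.1 ≠ 0 ∧ w p.2 ≠ 0)) ∧
  (∀ a, (a, w a) ∈ N) ∧
  (∀ X ∈ P, ∃ a ∈ X, w a ≠ 0)

/-- Language of a disjunction-free multiplicity expression given as a list of
symbol/multiplicity pairs. -/
def dfLang (l : List (α × Mult)) : Set (UWord α) :=
  {w | (∀ p ∈ l, w p.1 ∈ p.2.sem) ∧ ∀ b, b ∉ l.map Prod.fst → w b = 0}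

/-- Finite unordered trees. -/
inductive UTree (α : Type) : Type where
  | node : α → List (UTree α) → UTree α

def UTree.lab : UTree α → α | .node a _ => a

def UTree.children : UTree α → List (UTree α) | .node _ ts => ts

/-- Twig queries: labels in `Σ ∪ {⋆}` (wildcard = `none`); each child subquery is tagged
with `false` for a child edge and `true` for a descendant edge. -/
inductive Twig (α : Type) : Type where
  | node : Option α → List (Twig α × Bool) → Twig α

/-- Proper subtree (proper descendant) relation. -/
inductive StrictDesc : UTree α → UTree α → Prop where
  | child {s t : UTree α} : s ∈ t.children → StrictDesc s t
  | step {s u t : UTree α} : StrictDesc s u → u ∈ t.children → StrictDesc s t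

/-- `Sat t q`: the twig query `q` can be embedded in the tree `t`
(root to root, child edges to child edges, descendant edges to proper descendants,
labels preserved up to wildcard). -/
def Sat : UTree α → Twig α → Prop
  | t, .node l qs =>
      (∀ x ∈ l, x = t.lab) ∧
      ∀ p ∈ qs, (p.2 = false → ∃ t' ∈ t.children, Sat t' p.1) ∧
                (p.2 = true → ∃ t', StrictDesc t' t ∧ Sat t' p.1)
termination_by t q => sizeOf q
decreasing_by
  all_goals
    obtain ⟨q', b'⟩ := p
    have h1 : sizeOf ((q', b') : Twig α × Bool) < sizeOf qs := List.sizeOf_lt_of_mem (by assumption)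
    simp at h1 ⊢
    omega

/-- `TEmb t' t` : the tree `t'` can be embedded in the tree `t` (root-, child-, and
label-preserving). -/
def TEmb : UTree α → UTree α → Prop
  | .node a ts', t => t.lab = a ∧ ∀ s' ∈ ts', ∃ s ∈ t.children, TEmb s' s

/-- `QGEmb E a q` : the twig query `q` can be embedded in the rooted graph with edge
relation `E` at root `a`. -/
def QGEmb (E : α → α → Prop) : α → Twig α → Prop
  | a, .node l qs =>
      (∀ x ∈ l, x = a) ∧
      ∀ p ∈ qs, (p.2 = false → ∃ b, E a b ∧ QGEmb E b p.1) ∧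
                (p.2 = true → ∃ b, Relation.TransGen E a b ∧ QGEmb E b p.1)
termination_by a q => sizeOf q
decreasing_by
  all_goals
    obtain ⟨q', b'⟩ := p
    have h1 : sizeOf ((q', b') : Twig α × Bool) < sizeOf qs := List.sizeOf_lt_of_mem (by assumption)
    simp at h1 ⊢
    omega

/-- Labeled paths of a tree: sequences of labels along root-to-node paths. -/
inductive IsLabPath : UTree α → List α → Prop where
  | root {a : α} {ts : List (UTree α)} : IsLabPath (UTree.node a ts) [a]
  | cons {a : α} {ts : List (UTree α)} {s : UTree α} {p : List α} :
      s ∈ ts → IsLabPath s p → IsLabPath (UTree.node a ts) (a :: p)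

/-- Paths of a rooted graph: nonempty vertex sequences starting at the root and
following edges. -/
def IsGPath (E : α → α → Prop) (root : α) (p : List α) : Prop :=
  p ≠ [] ∧ p.head? = some root ∧ p.Chain' E

/-- The unfolding of a rooted graph, truncated at depth `n`.  For a graph with no cycle
reachable from the root, taking `n = Fintype.card α` yields the full unfolding. -/
noncomputable def unfoldG [Fintype α] (E : α → α → Prop) : ℕ → α → UTree α
  | 0, a => .node a []
  | n + 1, a => .node a (((Finset.univ.filter fun b => E a b).toList).map (unfoldG E n))

/-- Number of leaves of a tree. -/
def leafCount : UTree α → ℕ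
  | .node _ ts => if ts.isEmpty then 1 else (ts.attach.map (fun s => leafCount s.1)).sum
decreasing_by
  have h1 := List.sizeOf_lt_of_mem s.2
  simp
  omega

/-- Disjunction-free multiplicity schema: a root label together with, for each label `a`,
a disjunction-free multiplicity expression given as the multiplicity `R a b` of every
symbol `b` (`Mult.zero` meaning `b` does not occur). -/
structure MS (α : Type) where
  root : α
  R : α → α → Mult

/-- Every node's children-label multiset matches the rule for the node's label. -/
inductive LocalOK [DecidableEq α] (R : α → α → Mult) : UTree α → Prop where
  | node {a : α} {ts : List (UTree α)} :
      (∀ b, ((ts.map UTree.lab).count b) ∈ (R a b).sem) →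
      (∀ s ∈ ts, LocalOK R s) →
      LocalOK R (UTree.node a ts)

/-- A tree satisfies a disjunction-free multiplicity schema. -/
def SatS [DecidableEq α] (S : MS α) (t : UTree α) : Prop :=
  t.lab = S.root ∧ LocalOK S.R t

/-- Edges of the universal dependency graph: `b` occurs in `R a` with multiplicity `+` or `1`. -/
def uEdge (S : MS α) (a b : α) : Prop := S.R a b = Mult.plus ∨ S.R a b = Mult.one

/-- Edges of the dependency graph: `b` occurs in `R a` with multiplicity in `{*,+,?,1}`. -/
def dEdge (S : MS α) (a b : α) : Prop := S.R a b ≠ Mult.zero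

/-- A simulation of the rooted graph `(α, root, E)` in the tree `t`. -/
def IsSimulation (E : α → α → Prop) (root : α) (t : UTree α) (R : α → UTree α → Prop) : Prop :=
  R root t ∧ (∀ a s, R a s → s.lab = a) ∧
  (∀ a s, R a s → ∀ b, E a b → ∃ s' ∈ s.children, R b s')

/-- One fuse step: two sibling nodes with the same label are merged into a single node
whose children are the children of both (applied anywhere in the tree). -/
inductive Fuse : UTree α → UTree α → Prop where
  | here {a b : α} {l₁ l₂ l₃ cs₁ cs₂ : List (UTree α)} :
      Fuse (UTree.node a (l₁ ++ UTree.node b cs₁ :: l₂ ++ UTree.node b cs₂ :: l₃))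
           (UTree.node a (l₁ ++ UTree.node b (cs₁ ++ cs₂) :: l₂ ++ l₃))
  | there {a : α} {s s' : UTree α} {l₁ l₂ : List (UTree α)} :
      Fuse s s' → Fuse (UTree.node a (l₁ ++ s :: l₂)) (UTree.node a (l₁ ++ s' :: l₂))

/-- One add step: an arbitrary new subtree is attached as an additional child of some
node of the tree. -/
inductive AddOp : UTree α → UTree α → Prop where
  | here {a : α} {s : UTree α} {l : List (UTree α)} :
      AddOp (UTree.node a l) (UTree.node a (s :: l))
  | there {a : α} {s s' : UTree α} {l₁ l₂ : List (UTree α)} :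
      AddOp s s' → AddOp (UTree.node a (l₁ ++ s :: l₂)) (UTree.node a (l₁ ++ s' :: l₂))

section Aux

variable {α : Type}

noncomputable def uwAux (a : α) (c : ℕ) : UWord α := fun b => if b = a then c else 0

lemma uwAux_self (a : α) (c : ℕ) : uwAux a c a = c := by simp [uwAux]

lemma uwAux_mem_single {a : α} {m : Mult} {c : ℕ} (hc : c ∈ m.sem) :
    uwAux a c ∈ singleLang a m :=
  ⟨by simpa [uwAux] using hc, fun b hb => by simp [uwAux, hb]⟩

lemma mult_sem_nonempty (m : Mult) : ∃ c, c ∈ m.sem := by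
  cases m
  · exact ⟨0, by simp [Mult.sem]⟩
  · exact ⟨1, by simp [Mult.sem]⟩
  · exact ⟨0, by simp [Mult.sem]⟩
  · exact ⟨1, by simp [Mult.sem]⟩
  · exact ⟨0, by simp [Mult.sem]⟩

lemma single_apply_ne {u : UWord α} {b : α} {m : Mult} (hu : u ∈ singleLang b m)
    {a : α} (hab : a ≠ b) : u a = 0 := hu.2 a hab

lemma disj_apply {u : UWord α} {D : Disj α} (hu : u ∈ disjLang D) {a : α}
    (ha : a ∉ D.map Prod.fst) : u a = 0 := by
  obtain ⟨p, hp, hup⟩ := hu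
  exact single_apply_ne hup (fun h => ha (h ▸ List.mem_map_of_mem hp))

lemma sumWords_cons (u : UWord α) (ws : List (UWord α)) (a : α) :
    sumWords (u :: ws) a = u a + sumWords ws a := by
  simp [sumWords]

lemma pow_apply_zero {u : UWord α} {D : Disj α} {M : Mult}
    (hu : u ∈ powLang (disjLang D) M) {a : α} (ha : a ∉ D.map Prod.fst) :
    u a = 0 := by
  obtain ⟨ws, -, hws, rfl⟩ := hu
  induction ws with
  | nil => rfl
  | cons v ws ih =>
      rw [sumWords_cons, disj_apply (hws v (by simp)) ha,
        ih (fun v hv => hws v (by simp [hv]))]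

lemma pow_nonempty {D : Disj α} (hD : D ≠ []) (M : Mult) :
    ∃ u, u ∈ powLang (disjLang D) M := by
  obtain ⟨⟨b, m⟩, hb⟩ : ∃ q, q ∈ D := List.exists_mem_of_ne_nil D hD
  obtain ⟨c, hc⟩ := mult_sem_nonempty m
  obtain ⟨k, hk⟩ := mult_sem_nonempty M
  exact ⟨sumWords (List.replicate k (uwAux b c)),
    List.replicate k (uwAux b c), by simpa using hk,
    fun v hv => by rw [List.eq_of_mem_replicate hv]; exact ⟨(b, m), hb, uwAux_mem_single hc⟩, rfl⟩

lemma forall2_sum_zero {E : DME α} {ws : List (UWord α)}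
    (h : List.Forall₂ (fun p u => u ∈ powLang (disjLang p.1) p.2) E ws)
    {a : α} (ha : ∀ p ∈ E, a ∉ p.1.map Prod.fst) :
    sumWords ws a = 0 := by
  induction h with
  | nil => rfl
  | cons hpu _ ih =>
      rw [sumWords_cons, pow_apply_zero hpu (ha _ (by simp)),
        ih (fun p hp => ha p (by simp [hp]))]

lemma dme_symbols_cons (q : Disj α × Mult) (E : DME α) :
    dmeSymbols (q :: E) = q.1.map Prod.fst ++ dmeSymbols E := by
  simp [dmeSymbols]

lemma exists_forall2 (E : DME α) (hne : ∀ p ∈ E, p.1 ≠ []) :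
    ∃ ws, List.Forall₂ (fun p u => u ∈ powLang (disjLang p.1) p.2) E ws := by
  induction E with
  | nil => exact ⟨[], .nil⟩
  | cons q E' ih =>
      obtain ⟨ws, hws⟩ := ih (fun r hr => hne r (by simp [hr]))
      obtain ⟨u, hu⟩ := pow_nonempty (hne q (by simp)) q.2
      exact ⟨u :: ws, .cons hu hws⟩

lemma decompAux {E : DME α} {ws : List (UWord α)}
    (h : List.Forall₂ (fun p u => u ∈ powLang (disjLang p.1) p.2) E ws)
    {a : α} (hnd : (dmeSymbols E).Nodup)
    {p} (hp : p ∈ E) (hpa : a ∈ p.1.map Prod.fst) :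
    ∃ u ∈ powLang (disjLang p.1) p.2, sumWords ws a = u a := by
  induction h with
  | nil => cases hp
  | @cons q u E' ws' hqu h' ih =>
      rw [dme_symbols_cons, List.nodup_append] at hnd
      by_cases hq : a ∈ q.1.map Prod.fst
      · have hpq : p = q := by
          rcases List.mem_cons.mp hp with h1 | h1
          · exact h1
          · exact absurd (List.mem_flatMap.mpr ⟨p, h1, hpa⟩) (fun h => hnd.2.2 _ hq _ h rfl)
        subst hpq
        refine ⟨u, hqu, ?_⟩
        rw [sumWords_cons, forall2_sum_zero h'
          (fun r hr hra => hnd.2.2 _ hq _ (List.mem_flatMap.mpr ⟨r, hr, hra⟩) rfl), Nat.add_zero]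
      · have hp' : p ∈ E' := by
          rcases List.mem_cons.mp hp with h1 | h1
          · exact absurd (h1 ▸ hpa) hq
          · exact h1
        obtain ⟨u', hu', hu'a⟩ := ih hnd.2.1 hp'
        refine ⟨u', hu', ?_⟩
        rw [sumWords_cons, pow_apply_zero hqu hq, hu'a, Nat.zero_add]

lemma realizeAux {E : DME α} (hne : ∀ p ∈ E, p.1 ≠ [])
    (hnd : (dmeSymbols E).Nodup) {a : α} {p} (hp : p ∈ E)
    (hpa : a ∈ p.1.map Prod.fst) {u} (hu : u ∈ powLang (disjLang p.1) p.2) :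
    ∃ w ∈ dmeLang E, w a = u a := by
  induction E with
  | nil => cases hp
  | cons q E' ih =>
      rw [dme_symbols_cons, List.nodup_append] at hnd
      rcases List.mem_cons.mp hp with rfl | hp'
      · obtain ⟨ws', hws'⟩ := exists_forall2 E' (fun r hr => hne r (by simp [hr]))
        refine ⟨sumWords (u :: ws'), ⟨u :: ws', .cons hu hws', rfl⟩, ?_⟩
        rw [sumWords_cons, forall2_sum_zero hws'
          (fun r hr hra => hnd.2.2 _ hpa _ (List.mem_flatMap.mpr ⟨r, hr, hra⟩) rfl), Nat.add_zero]
      · obtain ⟨w', hw', hw'a⟩ := ih (fun r hr => hne r (by simp [hr])) hnd.2.1 hp'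
        obtain ⟨ws', hws', rfl⟩ := hw'
        obtain ⟨u0, hu0⟩ := pow_nonempty (hne q (by simp)) q.2
        refine ⟨sumWords (u0 :: ws'), ⟨u0 :: ws', .cons hu0 hws', rfl⟩, ?_⟩
        rw [sumWords_cons, pow_apply_zero hu0
          (fun ha => hnd.2.2 _ ha _ (List.mem_flatMap.mpr ⟨p, hp', hpa⟩) rfl), hw'a, Nat.zero_add]

lemma sublist_flatMapAux {β : Type} {l : List β} {f : β → List α} {b : β} (hb : b ∈ l) :
    List.Sublist (f b) (l.flatMap f) := by
  induction l with
  | nil => cases hb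
  | cons c l ih =>
      rw [List.flatMap_cons]
      rcases List.mem_cons.mp hb with rfl | hb'
      · exact List.sublist_append_left _ _
      · exact (ih hb').trans (List.sublist_append_right _ _)

end Aux

/-- for every symbol, the set of its possible occurrence counts in words of
the language of a normalized disjunctive multiplicity expression is the interpretation
of some multiplicity. -/
theorem occurrence_counts_are_a_multiplicity
    {α : Type} (E : DME α) (hE : Normalized E) :
    ∀ a : α, ∃ M : Mult, {x : ℕ | ∃ w ∈ dmeLang E, w a = x} = M.sem := by
  intro a
  obtain ⟨hnd, hnorm⟩ := hE
  have hne : ∀ p ∈ E, p.1 ≠ [] := fun p hp => (hnorm p hp).1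
  by_cases ha : a ∈ dmeSymbols E
  · obtain ⟨p, hp, hpa⟩ := List.mem_flatMap.mp ha
    obtain ⟨⟨a', m⟩, haD, rfl⟩ := List.mem_map.mp hpa
    set a := a' with ha'
    -- reduce to the single component
    have hS : {x : ℕ | ∃ w ∈ dmeLang E, w a = x}
        = {x : ℕ | ∃ u ∈ powLang (disjLang p.1) p.2, u a = x} := by
      ext x
      constructor
      · rintro ⟨w, ⟨ws, hws, rfl⟩, rfl⟩
        obtain ⟨u, hu, hua⟩ := decompAux hws hnd hp hpa
        exact ⟨u, hu, hua.symm⟩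
      · rintro ⟨u, hu, rfl⟩
        obtain ⟨w, hw, hwa⟩ := realizeAux hne hnd hp hpa hu
        exact ⟨w, hw, hwa⟩
    rw [hS]
    have hDnd : (p.1.map Prod.fst).Nodup :=
      (sublist_flatMapAux hp).nodup hnd
    have huniq : ∀ q ∈ p.1, q.1 = a → q = (a, m) := by
      intro q hq hqa
      exact List.inj_on_of_nodup_map hDnd hq haD hqa
    have hval : ∀ u ∈ disjLang p.1, u a ∈ m.sem ∨ u a = 0 := by
      rintro u ⟨q, hq, hu⟩
      by_cases h : q.1 = a
      · left
        have := huniq q hq h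
        subst this
        exact hu.1
      · right
        exact single_apply_ne hu (Ne.symm h)
    -- realizability of a given value inside the component
    have hreal : ∀ c ∈ m.sem, ∀ k ∈ p.2.sem,
        ∃ u ∈ powLang (disjLang p.1) p.2, u a = k * c := by
      intro c hc k hk
      refine ⟨sumWords (List.replicate k (uwAux a c)),
        ⟨List.replicate k (uwAux a c), by simpa using hk,
          fun v hv => by
            rw [List.eq_of_mem_replicate hv]
            exact ⟨(a, m), haD, uwAux_mem_single hc⟩, rfl⟩, ?_⟩
      simp [sumWords, List.map_replicate, uwAux_self, Nat.mul_comm]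
    by_cases hone : p.2 = Mult.one
    · by_cases hsing : ∀ q ∈ p.1, q.1 = a
      · -- singleton disjunction, multiplicity one : set = m.sem
        refine ⟨m, ?_⟩
        ext x
        simp only [Set.mem_setOf_eq]
        constructor
        · rintro ⟨u, ⟨ws, hlen, hmem, rfl⟩, rfl⟩
          rw [hone] at hlen
          simp only [Mult.sem, Set.mem_singleton_iff] at hlen
          obtain ⟨v, rfl⟩ := List.length_eq_one_iff.mp hlen
          obtain ⟨q, hq, hv⟩ := hmem v (by simp)
          have := huniq q hq (hsing q hq)
          subst this
          simpa [sumWords_cons, sumWords] using hv.1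
        · intro hx
          obtain ⟨u, hu, hua⟩ := hreal x hx 1 (by simp [hone, Mult.sem])
          exact ⟨u, hu, by simpa using hua⟩
      · -- non-singleton, multiplicity one : set = m.sem ∪ {0}
        push_neg at hsing
        obtain ⟨q0, hq0, hq0a⟩ := hsing
        have key : {x : ℕ | ∃ u ∈ powLang (disjLang p.1) p.2, u a = x}
            = m.sem ∪ {0} := by
          ext x
          simp only [Set.mem_setOf_eq, Set.mem_union, Set.mem_singleton_iff]
          constructor
          · rintro ⟨u, ⟨ws, hlen, hmem, rfl⟩, rfl⟩
            rw [hone] at hlen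
            simp only [Mult.sem, Set.mem_singleton_iff] at hlen
            obtain ⟨v, rfl⟩ := List.length_eq_one_iff.mp hlen
            have := hval v (hmem v (by simp))
            simpa [sumWords_cons, sumWords] using this
          · rintro (hx | rfl)
            · obtain ⟨u, hu, hua⟩ := hreal x hx 1 (by simp [hone, Mult.sem])
              exact ⟨u, hu, by simpa using hua⟩
            · obtain ⟨c0, hc0⟩ := mult_sem_nonempty q0.2
              refine ⟨sumWords [uwAux q0.1 c0],
                ⟨[uwAux q0.1 c0], by simp [hone, Mult.sem],
                  fun v hv => by
                    simp only [List.mem_singleton] at hv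
                    subst hv
                    exact ⟨q0, hq0, uwAux_mem_single hc0⟩, rfl⟩, ?_⟩
              simp [sumWords, uwAux, Ne.symm hq0a]
        rw [key]
        cases m
        · exact ⟨Mult.zero, by ext x; simp [Mult.sem]⟩
        · exact ⟨Mult.opt, by ext x; simp [Mult.sem]⟩
        · exact ⟨Mult.opt, by ext x; simp [Mult.sem]⟩
        · exact ⟨Mult.star, by ext x; simp [Mult.sem]; omega⟩
        · exact ⟨Mult.star, by ext x; simp [Mult.sem]⟩
    · -- multiplicity plus, all inner multiplicities one
      obtain ⟨hplus, hallone⟩ := (hnorm p hp).2.1 hone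
      have hm : m = Mult.one := hallone (a, m) haD
      subst hm
      have hval1 : ∀ u ∈ disjLang p.1, u a = 1 ∨ u a = 0 := by
        intro u hu
        rcases hval u hu with h | h
        · left; simpa [Mult.sem] using h
        · right; exact h
      by_cases hsing : ∀ q ∈ p.1, q.1 = a
      · -- singleton : set = plus.sem
        refine ⟨Mult.plus, ?_⟩
        ext x
        simp only [Set.mem_setOf_eq]
        constructor
        · rintro ⟨u, ⟨ws, hlen, hmem, rfl⟩, rfl⟩
          rw [hplus] at hlen
          simp only [Mult.sem, Set.mem_setOf_eq] at hlen ⊢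
          have hall1 : ∀ v ∈ ws, v a = 1 := by
            intro v hv
            obtain ⟨q, hq, hvq⟩ := hmem v hv
            have := huniq q hq (hsing q hq)
            subst this
            simpa [Mult.sem] using hvq.1
          have hsum : sumWords ws a = ws.length := by
            have : ws.map (fun v => v a) = List.replicate ws.length 1 := by
              have := List.eq_replicate_of_mem (l := ws.map (fun v => v a)) (a := 1)
                (fun b hb => by
                  obtain ⟨v, hv, rfl⟩ := List.mem_map.mp hb
                  exact hall1 v hv)
              simpa using this
            simp [sumWords, this]
          rw [hsum]
          exact hlen
        · intro hx
          simp only [Mult.sem, Set.mem_setOf_eq] at hx ⊢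
          obtain ⟨u, hu, hua⟩ := hreal 1 (by simp [Mult.sem]) x (by rw [hplus]; exact hx)
          exact ⟨u, hu, by simpa using hua⟩
      · -- non-singleton : set = ℕ
        push_neg at hsing
        obtain ⟨q0, hq0, hq0a⟩ := hsing
        refine ⟨Mult.star, Set.eq_univ_iff_forall.mpr fun x => ?_⟩
        simp only [Set.mem_setOf_eq]
        rcases Nat.eq_zero_or_pos x with rfl | hx
        · obtain ⟨c0, hc0⟩ := mult_sem_nonempty q0.2
          refine ⟨sumWords [uwAux q0.1 c0],
            ⟨[uwAux q0.1 c0], by simp [hplus, Mult.sem],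
              fun v hv => by
                simp only [List.mem_singleton] at hv
                subst hv
                exact ⟨q0, hq0, uwAux_mem_single hc0⟩, rfl⟩, ?_⟩
          simp [sumWords, uwAux, Ne.symm hq0a]
        · obtain ⟨u, hu, hua⟩ := hreal 1 (by simp [Mult.sem]) x
            (by rw [hplus]; exact hx)
          exact ⟨u, hu, by simpa using hua⟩
  · -- symbol does not occur : set = {0}
    refine ⟨Mult.zero, ?_⟩
    have hnot : ∀ p ∈ E, a ∉ p.1.map Prod.fst :=
      fun p hp hpa => ha (List.mem_flatMap.mpr ⟨p, hp, hpa⟩)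
    ext x
    simp only [Set.mem_setOf_eq, Mult.sem, Set.mem_singleton_iff]
    constructor
    · rintro ⟨w, ⟨ws, hws, rfl⟩, rfl⟩
      exact forall2_sum_zero hws hnot
    · rintro rfl
      obtain ⟨ws, hws⟩ := exists_forall2 E hne
      exact ⟨sumWords ws, ⟨ws, hws, rfl⟩, forall2_sum_zero hws hnot⟩
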